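/- Let {b_j}_{j∈J} be an orthonormal basis of H₂ and let T ⊆ J be finite. Then the set F(T) = { v ∈ H₁ ⊗ H₂ : ‖v‖ = 1 and, writing v = Σ_j v_j ⊗ b_j with v_j ∈ H₁, the family {v_j}_{j∈T} is linearly independent } is open in the unit sphere of H₁ ⊗ H₂ (with the norm topology). -/

import Mathlib

open scoped InnerProductSpace

noncomputable section

/-- The (completed) Hilbert tensor product of two complex Hilbert spaces `H₁`, `H₂`,
presented as a Hilbert space `H` together with a bilinear map `tmul` (elementary tensors)
whose inner products multiply, whose elementary tensors span a dense subspace, and together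
with the tensor product `map A B = A ⊗ B` of bounded operators. -/
structure HilbertTensor (H₁ H₂ H : Type*)
    [NormedAddCommGroup H₁] [InnerProductSpace ℂ H₁] [CompleteSpace H₁]
    [NormedAddCommGroup H₂] [InnerProductSpace ℂ H₂] [CompleteSpace H₂]
    [NormedAddCommGroup H] [InnerProductSpace ℂ H] [CompleteSpace H] where
  tmul : H₁ →ₗ[ℂ] H₂ →ₗ[ℂ] H
  inner_tmul : ∀ x₁ y₁ x₂ y₂, ⟪tmul x₁ y₁, tmul x₂ y₂⟫_ℂ = ⟪x₁, x₂⟫_ℂ * ⟪y₁, y₂⟫_ℂ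
  dense_span : Dense (↑(Submodule.span ℂ {z : H | ∃ x y, z = tmul x y}) : Set H)
  map : (H₁ →L[ℂ] H₁) → (H₂ →L[ℂ] H₂) → (H →L[ℂ] H)
  map_tmul : ∀ A B x y, map A B (tmul x y) = tmul (A x) (B y)

variable {H₁ H₂ H : Type*}
  [NormedAddCommGroup H₁] [InnerProductSpace ℂ H₁] [CompleteSpace H₁]
  [NormedAddCommGroup H₂] [InnerProductSpace ℂ H₂] [CompleteSpace H₂]
  [NormedAddCommGroup H] [InnerProductSpace ℂ H] [CompleteSpace H]

/-- `v` is cyclic for the first factor: `{(A ⊗ I) v : A bounded on H₁}` is dense in `H`. -/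
def HilbertTensor.CyclicFst (T : HilbertTensor H₁ H₂ H) (v : H) : Prop :=
  Dense (Set.range fun A : H₁ →L[ℂ] H₁ => T.map A 1 v)

/-- An orthogonal projection on a Hilbert space: a self-adjoint idempotent bounded operator. -/
def IsONProj {E : Type*} [NormedAddCommGroup E] [InnerProductSpace ℂ E] [CompleteSpace E]
    (P : E →L[ℂ] E) : Prop :=
  IsSelfAdjoint P ∧ P ∘L P = P

/-- The algebra of the second factor is maximally correlated with the algebra of the first
factor in the state `v`. -/
def HilbertTensor.MaxCorrSndFst (T : HilbertTensor H₁ H₂ H) (v : H) : Prop :=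
  ∀ P' : H₂ →L[ℂ] H₂, IsONProj P' → P' ≠ 0 → ∀ ε : ℝ, 0 < ε →
    ∃ P : H₁ →L[ℂ] H₁, IsONProj P ∧ P ≠ 0 ∧
      0 < (⟪v, T.map P 1 v⟫_ℂ).re ∧
      (1 - ε) * (⟪v, T.map P 1 v⟫_ℂ).re ≤ (⟪v, T.map P P' v⟫_ℂ).re

/-- The orthogonal projection onto the span of a vector, as an operator `E →L[ℂ] E`. -/
def projSpan {E : Type*} [NormedAddCommGroup E] [InnerProductSpace ℂ E] [CompleteSpace E]
    (w : E) : E →L[ℂ] E :=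
  (ℂ ∙ w).subtypeL ∘L (ℂ ∙ w).orthogonalProjectionOnto

namespace HilbertTensor

theorem norm_tmul (T : HilbertTensor H₁ H₂ H) (x : H₁) (y : H₂) :
    ‖T.tmul x y‖ = ‖x‖ * ‖y‖ := by
  have h := T.inner_tmul x y x y
  rw [inner_self_eq_norm_sq_to_K, inner_self_eq_norm_sq_to_K, inner_self_eq_norm_sq_to_K] at h
  have h2 : (‖T.tmul x y‖ : ℝ) ^ 2 = ‖x‖ ^ 2 * ‖y‖ ^ 2 := by exact_mod_cast h
  nlinarith [norm_nonneg (T.tmul x y), norm_nonneg x, norm_nonneg y,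
    mul_nonneg (norm_nonneg x) (norm_nonneg y)]

end HilbertTensor

namespace HilbertTensor

/-- `x ↦ T.tmul x y` as a continuous linear map. -/
def tmulR (T : HilbertTensor H₁ H₂ H) (y : H₂) : H₁ →L[ℂ] H :=
  LinearMap.mkContinuous (T.tmul.flip y) ‖y‖ fun x => by
    rw [LinearMap.flip_apply, T.norm_tmul, mul_comm]

@[simp] theorem tmulR_apply (T : HilbertTensor H₁ H₂ H) (y : H₂) (x : H₁) :
    T.tmulR y x = T.tmul x y := rfl

/-- `y ↦ T.tmul x y` as a continuous linear map. -/
def tmulL (T : HilbertTensor H₁ H₂ H) (x : H₁) : H₂ →L[ℂ] H :=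
  LinearMap.mkContinuous (T.tmul x) ‖x‖ fun y => by rw [T.norm_tmul]

@[simp] theorem tmulL_apply (T : HilbertTensor H₁ H₂ H) (x : H₁) (y : H₂) :
    T.tmulL x y = T.tmul x y := rfl

/-- The functional `x ↦ ⟪v, x ⊗ w⟫`. -/
def coeffFun (T : HilbertTensor H₁ H₂ H) (w : H₂) (v : H) : StrongDual ℂ H₁ :=
  LinearMap.mkContinuous
    { toFun := fun x => ⟪v, T.tmul x w⟫_ℂ
      map_add' := fun x y => by simp [inner_add_right]
      map_smul' := fun c x => by simp [inner_smul_right] }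
    (‖v‖ * ‖w‖) fun x => by
      calc ‖⟪v, T.tmul x w⟫_ℂ‖ ≤ ‖v‖ * ‖T.tmul x w‖ := norm_inner_le_norm _ _
      _ = ‖v‖ * ‖w‖ * ‖x‖ := by rw [T.norm_tmul]; ring

@[simp] theorem coeffFun_apply (T : HilbertTensor H₁ H₂ H) (w : H₂) (v : H) (x : H₁) :
    T.coeffFun w v x = ⟪v, T.tmul x w⟫_ℂ := rfl

/-- The coefficient of `v` along `w` in the second slot. -/
def coeff (T : HilbertTensor H₁ H₂ H) (w : H₂) (v : H) : H₁ :=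
  (InnerProductSpace.toDual ℂ H₁).symm (T.coeffFun w v)

theorem inner_coeff (T : HilbertTensor H₁ H₂ H) (w : H₂) (v : H) (x : H₁) :
    ⟪T.coeff w v, x⟫_ℂ = ⟪v, T.tmul x w⟫_ℂ := by
  rw [coeff, InnerProductSpace.toDual_symm_apply, coeffFun_apply]

theorem inner_coeff' (T : HilbertTensor H₁ H₂ H) (w : H₂) (v : H) (x : H₁) :
    ⟪x, T.coeff w v⟫_ℂ = ⟪T.tmul x w, v⟫_ℂ := by
  rw [← inner_conj_symm, inner_coeff, inner_conj_symm]

theorem coeff_sub (T : HilbertTensor H₁ H₂ H) (w : H₂) (u v : H) :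
    T.coeff w u - T.coeff w v = T.coeff w (u - v) := by
  refine ext_inner_left ℂ fun x => ?_
  rw [inner_sub_right, inner_coeff', inner_coeff', inner_coeff', inner_sub_right]

theorem norm_coeff_le (T : HilbertTensor H₁ H₂ H) (w : H₂) (v : H) :
    ‖T.coeff w v‖ ≤ ‖v‖ * ‖w‖ := by
  rw [coeff, LinearIsometryEquiv.norm_map]
  exact LinearMap.mkContinuous_norm_le _ (by positivity) _

theorem continuous_coeff (T : HilbertTensor H₁ H₂ H) (w : H₂) :
    Continuous (T.coeff w) := by
  refine (LipschitzWith.of_dist_le_mul (K := ‖w‖₊) fun u v => ?_).continuous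
  rw [dist_eq_norm, dist_eq_norm, T.coeff_sub]
  simpa [mul_comm] using T.norm_coeff_le w (u - v)

theorem coeff_eq_of_hasSum (T : HilbertTensor H₁ H₂ H) {J : Type*} (b : HilbertBasis J ℂ H₂)
    {f : J → H₁} {v : H} (hf : HasSum (fun j => T.tmul (f j) (b j)) v) (j : J) :
    f j = T.coeff (b j) v := by
  classical
  refine ext_inner_left ℂ fun x => ?_
  rw [inner_coeff']
  have h1 : HasSum (fun k => ⟪T.tmul x (b j), T.tmul (f k) (b k)⟫_ℂ)
      ⟪T.tmul x (b j), v⟫_ℂ := (innerSL ℂ (T.tmul x (b j))).hasSum hf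
  have h2 : HasSum (fun k => ⟪T.tmul x (b j), T.tmul (f k) (b k)⟫_ℂ) ⟪x, f j⟫_ℂ := by
    have : ∀ k, ⟪T.tmul x (b j), T.tmul (f k) (b k)⟫_ℂ
        = if k = j then ⟪x, f j⟫_ℂ else 0 := fun k => by
      rw [T.inner_tmul, orthonormal_iff_ite.mp b.orthonormal]
      by_cases h : j = k <;> simp [h, eq_comm]
    simpa [this] using hasSum_ite_eq j ⟪x, f j⟫_ℂ
  exact h2.unique h1

end HilbertTensor

namespace HilbertTensor

theorem mem_of_hasSum {ι : Type*} {p : Submodule ℂ H} (hp : IsClosed (p : Set H))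
    {f : ι → H} {s : H} (h : HasSum f s) (hf : ∀ i, f i ∈ p) : s ∈ p :=
  hp.mem_of_tendsto h (Filter.Eventually.of_forall fun t => p.sum_mem fun i _ => hf i)

theorem hasSum_coeff (T : HilbertTensor H₁ H₂ H) {J : Type*} (b : HilbertBasis J ℂ H₂)
    (v : H) : HasSum (fun j => T.tmul (T.coeff (b j) v) (b j)) v := by
  classical
  obtain ⟨s, a, -⟩ := exists_hilbertBasis ℂ H₁
  set e : J × s → H := fun p => T.tmul (a p.2) (b p.1) with he
  have horth : Orthonormal ℂ e := by
    rw [orthonormal_iff_ite]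
    intro p q
    rw [he, T.inner_tmul, orthonormal_iff_ite.mp a.orthonormal,
      orthonormal_iff_ite.mp b.orthonormal]
    by_cases h1 : p.2 = q.2 <;> by_cases h2 : p.1 = q.1 <;>
      simp [h1, h2, Prod.ext_iff]
  set p : Submodule ℂ H := (Submodule.span ℂ (Set.range e)).topologicalClosure with hpdef
  have hpc : IsClosed (p : Set H) := Submodule.isClosed_topologicalClosure _
  have hmem : ∀ i j, T.tmul (a i) (b j) ∈ p := fun i j =>
    Submodule.le_topologicalClosure _ (Submodule.subset_span ⟨(j, i), rfl⟩)
  have htm : ∀ (x : H₁) (y : H₂), T.tmul x y ∈ p := by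
    intro x y
    have h1 : ∀ i : s, T.tmul (a i) y ∈ p := by
      intro i
      have := (T.tmulL (a i)).hasSum (b.hasSum_repr y)
      refine mem_of_hasSum hpc this fun j => ?_
      simpa using p.smul_mem (b.repr y j) (hmem i j)
    have := (T.tmulR y).hasSum (a.hasSum_repr x)
    refine mem_of_hasSum hpc this fun i => ?_
    simpa using p.smul_mem (a.repr x i) (h1 i)
  have hdense : ⊤ ≤ p := by
    intro u _
    have h1 : (↑(Submodule.span ℂ {z : H | ∃ x y, z = T.tmul x y}) : Set H) ⊆ (p : Set H) := by
      refine (Submodule.span_le.mpr ?_ : _ ≤ p)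
      rintro z ⟨x, y, rfl⟩
      exact htm x y
    have := T.dense_span u
    exact hpc.closure_subset_iff.mpr h1 this
  set B : HilbertBasis (J × s) ℂ H := HilbertBasis.mk horth hdense with hB
  have hBe : ∀ q, B q = e q := fun q => by rw [hB]; exact congrFun (HilbertBasis.coe_mk _ _) q
  have hsum : HasSum (fun q : J × s => ⟪e q, v⟫_ℂ • e q) v := by
    have := B.hasSum_repr v
    refine this.congr_fun fun q => ?_
    rw [B.repr_apply_apply, hBe]
  refine hsum.prod_fiberwise fun j => ?_
  have := (T.tmulR (b j)).hasSum (a.hasSum_repr (T.coeff (b j) v))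
  refine this.congr_fun fun i => ?_
  rw [a.repr_apply_apply, tmulR_apply, map_smul, LinearMap.smul_apply]
  congr 1
  rw [T.inner_coeff']

end HilbertTensor

/-- for an orthonormal basis `b` of `H₂` and a finite set `Tf` of basis indices,
the set `F(Tf)` of unit vectors `v = Σ_j f j ⊗ b j` whose coefficient vectors `{f j}_{j ∈ Tf}`
are linearly independent is open in the unit sphere of `H₁ ⊗ H₂` (norm topology). -/
theorem FT_isOpen_in_unitSphere
    [TopologicalSpace.SeparableSpace H₁] [TopologicalSpace.SeparableSpace H₂]
    (h₁ : 1 < Module.rank ℂ H₁) (h₂ : 1 < Module.rank ℂ H₂)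
    (T : HilbertTensor H₁ H₂ H)
    {J : Type*} (b : HilbertBasis J ℂ H₂) (Tf : Finset J) :
    IsOpen {v : Metric.sphere (0 : H) 1 | ∃ f : J → H₁,
      HasSum (fun j => T.tmul (f j) (b j)) (v : H) ∧
      LinearIndependent ℂ fun j : Tf => f j.1} := by
  have hset : {v : Metric.sphere (0 : H) 1 | ∃ f : J → H₁,
      HasSum (fun j => T.tmul (f j) (b j)) (v : H) ∧
      LinearIndependent ℂ fun j : Tf => f j.1}
      = (fun v : Metric.sphere (0 : H) 1 => fun j : Tf => T.coeff (b j.1) (v : H)) ⁻¹'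
        {g : Tf → H₁ | LinearIndependent ℂ g} := by
    ext v
    simp only [Set.mem_setOf_eq, Set.mem_preimage]
    constructor
    · rintro ⟨f, hf, hli⟩
      have hfe : (fun j : Tf => T.coeff (b j.1) (v : H)) = fun j : Tf => f j.1 :=
        funext fun j => (T.coeff_eq_of_hasSum b hf j.1).symm
      rw [hfe]; exact hli
    · intro hli
      exact ⟨fun j => T.coeff (b j) v, T.hasSum_coeff b v, hli⟩
  rw [hset]
  have hcont : Continuous (fun v : Metric.sphere (0 : H) 1 =>
      fun j : Tf => T.coeff (b j.1) (v : H)) :=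
    continuous_pi fun j => (T.continuous_coeff (b j.1)).comp continuous_subtype_val
  have hopen : IsOpen {g : Tf → H₁ | LinearIndependent ℂ g} :=
    isOpen_setOf_linearIndependent
  exact hopen.preimage hcont

end
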